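/- arXiv:2510.04629 — 12 statements merged into one kernel-verified Lean document; each statement's English description precedes it below -/
import Mathlib

section
/- Let a and b be pure quaternions (Re a = 0 and Re b = 0) with ‖a‖ = ‖b‖. Then a * Im(a*b) + Im(a*b) * b = 0 if and only if a*b = b*a. -/
open Quaternion

set_option maxHeartbeats 1000000 in
theorem sum_of_quaternion_cross_products_eq_zero_iff (a b : ℍ[ℝ])
    (ha : a.re = 0) (hb : b.re = 0) (hnorm : ‖a‖ = ‖b‖) :
    a * (a * b).im + (a * b).im * b = 0 ↔ a * b = b * a := by
  constructor
  · intro h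
    rw [Quaternion.ext_iff] at h ⊢
    simp only [Quaternion.re_add, Quaternion.imI_add, Quaternion.imJ_add, Quaternion.imK_add,
      Quaternion.re_mul, Quaternion.imI_mul, Quaternion.imJ_mul, Quaternion.imK_mul,
      Quaternion.re_im, Quaternion.imI_im, Quaternion.imJ_im, Quaternion.imK_im,
      Quaternion.re_zero, Quaternion.imI_zero, Quaternion.imJ_zero, Quaternion.imK_zero,
      ha, hb] at h ⊢
    obtain ⟨h0, h1, h2, h3⟩ := h
    set a1 := a.imI; set a2 := a.imJ; set a3 := a.imK
    set b1 := b.imI; set b2 := b.imJ; set b3 := b.imK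
    have key : (a1*b1+a2*b2+a3*b3)^2 = (a1^2+a2^2+a3^2)*(b1^2+b2^2+b3^2) := by
      linear_combination b1*h1 + b2*h2 + b3*h3
    have hc : (a2*b3-a3*b2)^2 + (a3*b1-a1*b3)^2 + (a1*b2-a2*b1)^2 = 0 := by
      linear_combination -key
    refine ⟨by ring, ?_, ?_, ?_⟩ <;>
      nlinarith [sq_nonneg (a2*b3-a3*b2), sq_nonneg (a3*b1-a1*b3), sq_nonneg (a1*b2-a2*b1)]
  · intro h
    have him : (a * b).im = 0 := by
      rw [Quaternion.ext_iff] at h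
      simp only [Quaternion.re_mul, Quaternion.imI_mul, Quaternion.imJ_mul, Quaternion.imK_mul,
        ha, hb] at h
      obtain ⟨h0, h1, h2, h3⟩ := h
      rw [Quaternion.ext_iff]
      simp only [Quaternion.re_im, Quaternion.imI_im, Quaternion.imJ_im, Quaternion.imK_im,
        Quaternion.imI_mul, Quaternion.imJ_mul, Quaternion.imK_mul,
        Quaternion.re_zero, Quaternion.imI_zero, Quaternion.imJ_zero, Quaternion.imK_zero,
        ha, hb]
      refine ⟨trivial, by linarith, by linarith, by linarith⟩
    rw [him, mul_zero, zero_mul, add_zero]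
end

section
/- Let a and b be nonreal quaternions (Im a ≠ 0 and Im b ≠ 0). Then there exists a nonzero quaternion p such that p⁻¹ * a * p = b (equivalently, a*p = p*b with p ≠ 0) if and only if Re a = Re b and ‖a‖ = ‖b‖. -/
open Quaternion

theorem similar_quaternions_characterization (a b : ℍ[ℝ])
    (ha : a.im ≠ 0) (hb : b.im ≠ 0) :
    (∃ p : ℍ[ℝ], p ≠ 0 ∧ p⁻¹ * a * p = b) ↔ a.re = b.re ∧ ‖a‖ = ‖b‖ := by
  constructor
  · rintro ⟨p, hp, rfl⟩
    constructor
    · have key : ∀ x y : ℍ[ℝ], (x * y).re = (y * x).re := by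
        intro x y; simp only [Quaternion.re_mul]; ring
      calc a.re = (p * (p⁻¹ * a)).re := by
            rw [← mul_assoc, mul_inv_cancel₀ hp, one_mul]
        _ = (p⁻¹ * a * p).re := (key _ _).symm
    · rw [norm_mul, norm_mul, norm_inv]
      have h0 : ‖p‖ ≠ 0 := norm_ne_zero_iff.mpr hp
      field_simp
  · rintro ⟨hre, hnorm⟩
    have hsq : a.imI ^ 2 + a.imJ ^ 2 + a.imK ^ 2
        = b.imI ^ 2 + b.imJ ^ 2 + b.imK ^ 2 := by
      have h1 : normSq a = normSq b := by
        rw [normSq_eq_norm_mul_self, normSq_eq_norm_mul_self, hnorm]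
      rw [Quaternion.normSq_def', Quaternion.normSq_def'] at h1
      linear_combination h1 - (a.re + b.re) * hre
    by_cases hz : a.im + b.im = 0
    · have hI : b.imI = -a.imI := by
        have := congrArg QuaternionAlgebra.imI hz; simp at this; linarith
      have hJ : b.imJ = -a.imJ := by
        have := congrArg QuaternionAlgebra.imJ hz; simp at this; linarith
      have hK : b.imK = -a.imK := by
        have := congrArg QuaternionAlgebra.imK hz; simp at this; linarith
      by_cases h12 : a.imI = 0 ∧ a.imJ = 0
      · have hK0 : a.imK ≠ 0 := by
          intro h
          apply ha
          ext <;> simp [h12.1, h12.2, h]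
        set q : ℍ[ℝ] := ⟨0, 1, 0, 0⟩ with hqdef
        refine ⟨q, ?_, ?_⟩
        · intro h
          have := congrArg QuaternionAlgebra.imI h
          simp [hqdef] at this
        · have hmul : a * q = q * b := by
            ext <;>
              simp only [Quaternion.re_mul, Quaternion.imI_mul, Quaternion.imJ_mul,
                Quaternion.imK_mul, hI, hJ, hK, hre, h12.1, h12.2] <;> simp only [hqdef] <;> ring
          rw [mul_assoc, hmul, ← mul_assoc, inv_mul_cancel₀, one_mul]
          intro h
          have := congrArg QuaternionAlgebra.imI h
          simp [hqdef] at this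
      · set p : ℍ[ℝ] := ⟨0, a.imJ, -a.imI, 0⟩ with hpdef
        have hp : p ≠ 0 := by
          intro h
          apply h12
          have h1 := congrArg QuaternionAlgebra.imI h
          have h2 := congrArg QuaternionAlgebra.imJ h
          simp [hpdef] at h1 h2
          exact ⟨by linarith, h1⟩
        refine ⟨p, hp, ?_⟩
        have hmul : a * p = p * b := by
          ext <;>
            simp only [Quaternion.re_mul, Quaternion.imI_mul, Quaternion.imJ_mul,
              Quaternion.imK_mul, hI, hJ, hK, hre] <;> simp only [hpdef] <;> ring
        rw [mul_assoc, hmul, ← mul_assoc, inv_mul_cancel₀ hp, one_mul]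
    · refine ⟨a.im + b.im, hz, ?_⟩
      have hmul : a * (a.im + b.im) = (a.im + b.im) * b := by
        ext
        · simp only [Quaternion.re_mul, Quaternion.re_add, Quaternion.imI_add,
            Quaternion.imJ_add, Quaternion.imK_add, Quaternion.re_im, Quaternion.imI_im,
            Quaternion.imJ_im, Quaternion.imK_im]
          linear_combination -hsq
        · simp only [Quaternion.imI_mul, Quaternion.re_add, Quaternion.imI_add,
            Quaternion.imJ_add, Quaternion.imK_add, Quaternion.re_im, Quaternion.imI_im,
            Quaternion.imJ_im, Quaternion.imK_im]
          linear_combination (a.imI + b.imI) * hre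
        · simp only [Quaternion.imJ_mul, Quaternion.re_add, Quaternion.imI_add,
            Quaternion.imJ_add, Quaternion.imK_add, Quaternion.re_im, Quaternion.imI_im,
            Quaternion.imJ_im, Quaternion.imK_im]
          linear_combination (a.imJ + b.imJ) * hre
        · simp only [Quaternion.imK_mul, Quaternion.re_add, Quaternion.imI_add,
            Quaternion.imJ_add, Quaternion.imK_add, Quaternion.re_im, Quaternion.imI_im,
            Quaternion.imJ_im, Quaternion.imK_im]
          linear_combination (a.imK + b.imK) * hre
      rw [mul_assoc, hmul, ← mul_assoc, inv_mul_cancel₀ hz, one_mul]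
end

section
/- Let a be a nonreal quaternion (Im a ≠ 0). Then a quaternion x satisfies x² = a if and only if x = (Real.sqrt ‖a‖ / ‖a + (‖a‖ : ℍ)‖) • (a + (‖a‖ : ℍ)) or x = −(Real.sqrt ‖a‖ / ‖a + (‖a‖ : ℍ)‖) • (a + (‖a‖ : ℍ)). -/
open Quaternion

private theorem quat_sq_eq (x : ℍ[ℝ]) :
    x ^ 2 = (2 * x.re) • x - ((‖x‖ ^ 2 : ℝ) : ℍ[ℝ]) := by
  have h := star_eq_two_re_sub (a := x)
  have h2 : x * star x = ((‖x‖ ^ 2 : ℝ) : ℍ[ℝ]) := by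
    rw [self_mul_star, sq, ← normSq_eq_norm_mul_self]
  have : x ^ 2 = x * ((2 * x.re : ℝ) - star x) := by
    rw [h, sub_sub_cancel, sq]
  rw [this, mul_sub, h2, mul_coe_eq_smul]

theorem quaternion_sqrt_nonreal (a : ℍ[ℝ]) (ha : a.im ≠ 0) (x : ℍ[ℝ]) :
    x ^ 2 = a ↔
      x = (Real.sqrt ‖a‖ / ‖a + (‖a‖ : ℍ[ℝ])‖) • (a + (‖a‖ : ℍ[ℝ])) ∨
      x = -((Real.sqrt ‖a‖ / ‖a + (‖a‖ : ℍ[ℝ])‖) • (a + (‖a‖ : ℍ[ℝ]))) := by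
  set b : ℍ[ℝ] := a + (‖a‖ : ℍ[ℝ]) with hbdef
  have ha0 : a ≠ 0 := by
    intro h; apply ha; rw [h]; simp
  have hna : 0 < ‖a‖ := norm_pos_iff.mpr ha0
  -- imaginary part positive square sum
  have him : 0 < a.imI ^ 2 + a.imJ ^ 2 + a.imK ^ 2 := by
    rcases lt_or_eq_of_le (by positivity : (0:ℝ) ≤ a.imI ^ 2 + a.imJ ^ 2 + a.imK ^ 2) with h | h
    · exact h
    · exfalso; apply ha
      have h1 : a.imI = 0 := by nlinarith [sq_nonneg a.imI, sq_nonneg a.imJ, sq_nonneg a.imK]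
      have h2 : a.imJ = 0 := by nlinarith [sq_nonneg a.imI, sq_nonneg a.imJ, sq_nonneg a.imK]
      have h3 : a.imK = 0 := by nlinarith [sq_nonneg a.imI, sq_nonneg a.imJ, sq_nonneg a.imK]
      ext <;> simp [h1, h2, h3]
  have hnormsq : ‖a‖ ^ 2 = a.re ^ 2 + (a.imI ^ 2 + a.imJ ^ 2 + a.imK ^ 2) := by
    rw [sq, ← normSq_eq_norm_mul_self, normSq_def']; ring
  have hre_lt : a.re ^ 2 < ‖a‖ ^ 2 := by nlinarith
  have hpos : 0 < ‖a‖ + a.re := by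
    nlinarith [hre_lt, hna, sq_nonneg (‖a‖ + a.re), sq_nonneg (‖a‖ - a.re)]
  have hnb : ‖b‖ ^ 2 = 2 * ‖a‖ * (‖a‖ + a.re) := by
    have : normSq b = normSq a + normSq ((‖a‖ : ℝ) : ℍ[ℝ]) + 2 * (a * star ((‖a‖ : ℝ) : ℍ[ℝ])).re :=
      normSq_add a _
    rw [sq, ← normSq_eq_norm_mul_self, this, normSq_coe, star_coe, mul_coe_eq_smul]
    rw [normSq_eq_norm_mul_self]
    simp [re_smul]
    ring
  have hbpos : 0 < ‖b‖ := by
    have h1 : 0 < ‖b‖ ^ 2 := by rw [hnb]; positivity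
    nlinarith [norm_nonneg b]
  have hb2 : b ^ 2 = (2 * (‖a‖ + a.re)) • a := by
    rw [quat_sq_eq b, hnb]
    have hbre : b.re = a.re + ‖a‖ := by simp [hbdef]
    rw [hbre, hbdef, smul_add]
    have : (2 * (a.re + ‖a‖)) • ((‖a‖ : ℝ) : ℍ[ℝ]) = ((2 * ‖a‖ * (‖a‖ + a.re) : ℝ) : ℍ[ℝ]) := by
      rw [← coe_mul_eq_smul, ← coe_mul]; congr 1; ring
    rw [this]
    have h2 : (2 * (a.re + ‖a‖)) • a = (2 * (‖a‖ + a.re)) • a := by rw [add_comm a.re]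
    rw [h2]; abel
  have hsq : ((Real.sqrt ‖a‖ / ‖b‖) • b) ^ 2 = a := by
    rw [smul_pow, hb2, smul_smul, div_pow, Real.sq_sqrt hna.le, hnb]
    have : ‖a‖ / (2 * ‖a‖ * (‖a‖ + a.re)) * (2 * (‖a‖ + a.re)) = 1 := by
      field_simp
    rw [this, one_smul]
  constructor
  · intro hx
    have hnx2 : ‖x‖ ^ 2 = ‖a‖ := by rw [← hx, norm_pow]
    have hnx : ‖x‖ = Real.sqrt ‖a‖ := by
      rw [← hnx2, Real.sqrt_sq (norm_nonneg x)]
    have hxne : x ≠ 0 := by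
      intro h; rw [h] at hx; simp at hx; exact ha0 hx.symm
    have hre0 : x.re ≠ 0 := by
      intro h
      apply ha
      rw [← hx, quat_sq_eq x, h]
      simp [← Quaternion.coe_pow]
    have hb : b = (2 * x.re) • x := by
      have hxa : a = (2 * x.re) • x - ((‖x‖ ^ 2 : ℝ) : ℍ[ℝ]) := by
        rw [← hx, quat_sq_eq x]
      rw [hbdef, ← hnx2, hxa]
      abel
    have hnb' : ‖b‖ = |2 * x.re| * ‖x‖ := by
      rw [hb, norm_smul, Real.norm_eq_abs]
    have habs : |2 * x.re| ≠ 0 := by simp [hre0]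
    have hxn0 : ‖x‖ ≠ 0 := norm_ne_zero_iff.mpr hxne
    have key : (Real.sqrt ‖a‖ / ‖b‖) • b = ((2 * x.re) / |2 * x.re|) • x := by
      rw [hnb', hb, smul_smul, ← hnx]
      congr 1
      field_simp
    rcases lt_trichotomy x.re 0 with h | h | h
    · right
      rw [key, abs_of_neg (by linarith : 2 * x.re < 0)]
      rw [div_neg_eq_neg_div, div_self (by linarith : 2 * x.re ≠ 0)]
      simp
    · exact absurd h hre0
    · left
      rw [key, abs_of_pos (by linarith : 0 < 2 * x.re),
        div_self (by linarith : 2 * x.re ≠ 0), one_smul]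
  · rintro (h | h) <;> rw [h]
    · exact hsq
    · rw [neg_pow, hsq]; norm_num
end

section
/- Let a be a nonreal quaternion (Im a ≠ 0). Set λ₁ = Real.sqrt ‖a‖ / ‖a + (‖a‖ : ℍ)‖ and λ₀ = λ₁ * ‖a‖. Then λ₀ and λ₁ are nonzero real numbers and ((λ₀ : ℍ) + λ₁ • a)² = a; that is, the square roots of a are ±(λ₀ + λ₁·a). -/
open Quaternion

theorem quaternion_sqrt_linear_form (a : ℍ[ℝ]) (ha : a.im ≠ 0)
    (l0 l1 : ℝ)
    (hl1 : l1 = Real.sqrt ‖a‖ / ‖a + (‖a‖ : ℍ[ℝ])‖)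
    (hl0 : l0 = l1 * ‖a‖) :
    l0 ≠ 0 ∧ l1 ≠ 0 ∧ ((l0 : ℍ[ℝ]) + l1 • a) ^ 2 = a := by
  have ha0 : a ≠ 0 := fun h => ha (by simp [h])
  have hna : 0 < ‖a‖ := norm_pos_iff.mpr ha0
  -- imaginary part nonzero: some component nonzero
  have him : a.imI ^ 2 + a.imJ ^ 2 + a.imK ^ 2 > 0 := by
    rcases lt_or_eq_of_le (by positivity : (0:ℝ) ≤ a.imI ^ 2 + a.imJ ^ 2 + a.imK ^ 2) with h | h
    · exact h
    · exfalso
      apply ha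
      have h1 : a.imI = 0 := by nlinarith [sq_nonneg a.imI, sq_nonneg a.imJ, sq_nonneg a.imK]
      have h2 : a.imJ = 0 := by nlinarith [sq_nonneg a.imI, sq_nonneg a.imJ, sq_nonneg a.imK]
      have h3 : a.imK = 0 := by nlinarith [sq_nonneg a.imI, sq_nonneg a.imJ, sq_nonneg a.imK]
      ext <;> simp [h1, h2, h3]
  have hnormsq : ‖a‖ ^ 2 = a.re ^ 2 + (a.imI ^ 2 + a.imJ ^ 2 + a.imK ^ 2) := by
    have := Quaternion.normSq_eq_norm_mul_self a
    rw [Quaternion.normSq_def'] at this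
    nlinarith [this]
  have hre : |a.re| < ‖a‖ := by
    rw [abs_lt]
    constructor <;> nlinarith [sq_nonneg (a.re + ‖a‖), sq_nonneg (a.re - ‖a‖)]
  have hpos : 0 < ‖a‖ + a.re := by
    have := neg_lt_of_abs_lt hre; linarith
  -- norm of a + ‖a‖
  have hc2 : ‖a + (‖a‖ : ℍ[ℝ])‖ ^ 2 = 2 * ‖a‖ * (‖a‖ + a.re) := by
    have := Quaternion.normSq_eq_norm_mul_self (a + (‖a‖ : ℍ[ℝ]))
    rw [Quaternion.normSq_def'] at this
    simp only [Quaternion.re_add, Quaternion.imI_add, Quaternion.imJ_add, Quaternion.imK_add,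
      Quaternion.re_coe, Quaternion.imI_coe, Quaternion.imJ_coe, Quaternion.imK_coe] at this
    nlinarith [this]
  have hcpos : 0 < ‖a + (‖a‖ : ℍ[ℝ])‖ := by
    nlinarith [norm_nonneg (a + (‖a‖ : ℍ[ℝ]))]
  have hl1pos : 0 < l1 := by
    rw [hl1]
    positivity
  -- key identity
  have hkey : l1 ^ 2 * (2 * (‖a‖ + a.re)) = 1 := by
    rw [hl1, div_pow, Real.sq_sqrt hna.le, hc2]
    field_simp
  have hl0pos : 0 < l0 := by rw [hl0]; exact mul_pos hl1pos hna
  refine ⟨hl0pos.ne', hl1pos.ne', ?_⟩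
  have hl0' : l0 = l1 * ‖a‖ := hl0
  rw [sq]
  ext
  · rw [Quaternion.re_mul]
    simp only [Quaternion.re_add, Quaternion.imI_add, Quaternion.imJ_add, Quaternion.imK_add,
      Quaternion.re_coe, Quaternion.imI_coe, Quaternion.imJ_coe, Quaternion.imK_coe,
      Quaternion.re_smul, Quaternion.imI_smul, Quaternion.imJ_smul, Quaternion.imK_smul,
      smul_eq_mul]
    rw [hl0']
    linear_combination a.re * hkey + l1 ^ 2 * hnormsq
  · rw [Quaternion.imI_mul]
    simp only [Quaternion.re_add, Quaternion.imI_add, Quaternion.imJ_add, Quaternion.imK_add,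
      Quaternion.re_coe, Quaternion.imI_coe, Quaternion.imJ_coe, Quaternion.imK_coe,
      Quaternion.re_smul, Quaternion.imI_smul, Quaternion.imJ_smul, Quaternion.imK_smul,
      smul_eq_mul]
    rw [hl0']
    linear_combination a.imI * hkey
  · rw [Quaternion.imJ_mul]
    simp only [Quaternion.re_add, Quaternion.imI_add, Quaternion.imJ_add, Quaternion.imK_add,
      Quaternion.re_coe, Quaternion.imI_coe, Quaternion.imJ_coe, Quaternion.imK_coe,
      Quaternion.re_smul, Quaternion.imI_smul, Quaternion.imJ_smul, Quaternion.imK_smul,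
      smul_eq_mul]
    rw [hl0']
    linear_combination a.imJ * hkey
  · rw [Quaternion.imK_mul]
    simp only [Quaternion.re_add, Quaternion.imI_add, Quaternion.imJ_add, Quaternion.imK_add,
      Quaternion.re_coe, Quaternion.imI_coe, Quaternion.imJ_coe, Quaternion.imK_coe,
      Quaternion.re_smul, Quaternion.imI_smul, Quaternion.imJ_smul, Quaternion.imK_smul,
      smul_eq_mul]
    rw [hl0']
    linear_combination a.imK * hkey
end

section
/- Let a and b be quaternions with ‖a‖ = ‖b‖ such that the product a*b is nonreal (Im(a*b) ≠ 0). Then (‖b + star a‖⁻¹ • (a * (b + star a)))² = a*b, and moreover ‖b + star a‖⁻¹ • (a * (b + star a)) = ‖a + star b‖⁻¹ • ((a + star b) * b); consequently a quaternion x satisfies x² = a*b if and only if x = ±‖b + star a‖⁻¹ • (a * (b + star a)). -/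
open Quaternion

private lemma im_sq_pos (q : ℍ[ℝ]) (hq : q.im ≠ 0) :
    0 < q.imI ^ 2 + q.imJ ^ 2 + q.imK ^ 2 := by
  have h : q.imI ≠ 0 ∨ q.imJ ≠ 0 ∨ q.imK ≠ 0 := by
    by_contra h
    push_neg at h
    apply hq
    ext <;> simp [h.1, h.2.1, h.2.2]
  rcases h with h | h | h <;>
    nlinarith [mul_self_pos.mpr h, sq_nonneg q.imI, sq_nonneg q.imJ, sq_nonneg q.imK]

private lemma sq_quartic (q x : ℍ[ℝ]) (hx : x ^ 2 = q) :
    4 * x.re ^ 4 - 4 * q.re * x.re ^ 2 - (q.imI ^ 2 + q.imJ ^ 2 + q.imK ^ 2) = 0 := by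
  have e0 : x.re ^ 2 - x.imI ^ 2 - x.imJ ^ 2 - x.imK ^ 2 = q.re := by
    simp only [← hx, sq, Quaternion.re_mul]; try ring
  have eI : 2 * x.re * x.imI = q.imI := by simp only [← hx, sq, Quaternion.imI_mul]; ring
  have eJ : 2 * x.re * x.imJ = q.imJ := by simp only [← hx, sq, Quaternion.imJ_mul]; ring
  have eK : 2 * x.re * x.imK = q.imK := by simp only [← hx, sq, Quaternion.imK_mul]; ring
  linear_combination 4 * x.re ^ 2 * e0 + (2 * x.re * x.imI + q.imI) * eI +
    (2 * x.re * x.imJ + q.imJ) * eJ + (2 * x.re * x.imK + q.imK) * eK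

private lemma sq_re_ne_zero (q x : ℍ[ℝ]) (hq : q.im ≠ 0) (hx : x ^ 2 = q) : x.re ≠ 0 := by
  intro h
  have hN := im_sq_pos q hq
  have hx4 := sq_quartic q x hx
  rw [h] at hx4
  nlinarith

private lemma sq_eq_of_re_eq (q x y : ℍ[ℝ]) (hq : q.im ≠ 0) (hx : x ^ 2 = q) (hy : y ^ 2 = q)
    (h : x.re = y.re) : x = y := by
  have hxre := sq_re_ne_zero q x hq hx
  have h2 : (2 : ℝ) * x.re ≠ 0 := by
    simp [hxre]
  have eI : 2 * x.re * x.imI = q.imI := by simp only [← hx, sq, Quaternion.imI_mul]; ring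
  have eJ : 2 * x.re * x.imJ = q.imJ := by simp only [← hx, sq, Quaternion.imJ_mul]; ring
  have eK : 2 * x.re * x.imK = q.imK := by simp only [← hx, sq, Quaternion.imK_mul]; ring
  have fI : 2 * y.re * y.imI = q.imI := by simp only [← hy, sq, Quaternion.imI_mul]; ring
  have fJ : 2 * y.re * y.imJ = q.imJ := by simp only [← hy, sq, Quaternion.imJ_mul]; ring
  have fK : 2 * y.re * y.imK = q.imK := by simp only [← hy, sq, Quaternion.imK_mul]; ring
  have hI : 2 * x.re * x.imI = 2 * x.re * y.imI := by linear_combination eI - fI - 2 * y.imI * h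
  have hJ : 2 * x.re * x.imJ = 2 * x.re * y.imJ := by linear_combination eJ - fJ - 2 * y.imJ * h
  have hK : 2 * x.re * x.imK = 2 * x.re * y.imK := by linear_combination eK - fK - 2 * y.imK * h
  have hI' : x.imI = y.imI := mul_left_cancel₀ h2 hI
  have hJ' : x.imJ = y.imJ := mul_left_cancel₀ h2 hJ
  have hK' : x.imK = y.imK := mul_left_cancel₀ h2 hK
  ext
  exacts [h, hI', hJ', hK']

private lemma sq_unique (q x y : ℍ[ℝ]) (hq : q.im ≠ 0) (hx : x ^ 2 = q) (hy : y ^ 2 = q) :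
    x = y ∨ x = -y := by
  have hN := im_sq_pos q hq
  have hx4 := sq_quartic q x hx
  have hy4 := sq_quartic q y hy
  have hxre := sq_re_ne_zero q x hq hx
  have hyre := sq_re_ne_zero q y hq hy
  have ht2 : 0 < x.re ^ 2 := by nlinarith [mul_self_pos.mpr hxre]
  have hs2 : 0 < y.re ^ 2 := by nlinarith [mul_self_pos.mpr hyre]
  have hfac : (x.re ^ 2 - y.re ^ 2) * (x.re ^ 2 + y.re ^ 2 - q.re) = 0 := by
    linear_combination (1 / 4) * hx4 - (1 / 4) * hy4
  have hpos : 0 < x.re ^ 2 + y.re ^ 2 - q.re := by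
    nlinarith [mul_pos ht2 hs2]
  have hsq : x.re ^ 2 - y.re ^ 2 = 0 := by
    rcases mul_eq_zero.mp hfac with h | h
    · exact h
    · linarith
  have hre : x.re = y.re ∨ x.re = -y.re := by
    have : (x.re - y.re) * (x.re + y.re) = 0 := by linear_combination hsq
    rcases mul_eq_zero.mp this with h | h
    · left; linarith
    · right; linarith
  rcases hre with h | h
  · exact Or.inl (sq_eq_of_re_eq q x y hq hx hy h)
  · right
    have hny : (-y) ^ 2 = q := by rw [neg_sq, hy]
    exact sq_eq_of_re_eq q x (-y) hq hx hny (by simpa using h)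

theorem quaternion_product_sqrt (a b : ℍ[ℝ])
    (hnorm : ‖a‖ = ‖b‖) (hab : (a * b).im ≠ 0) :
    (‖b + star a‖⁻¹ • (a * (b + star a))) ^ 2 = a * b ∧
    ‖b + star a‖⁻¹ • (a * (b + star a)) = ‖a + star b‖⁻¹ • ((a + star b) * b) ∧
    ∀ x : ℍ[ℝ], x ^ 2 = a * b ↔
      (x = ‖b + star a‖⁻¹ • (a * (b + star a)) ∨
       x = -(‖b + star a‖⁻¹ • (a * (b + star a)))) := by
  set q : ℍ[ℝ] := a * b with hqdef
  have hk' : normSq b = normSq a := by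
    rw [normSq_eq_norm_mul_self, normSq_eq_norm_mul_self, hnorm]
  set k : ℝ := normSq a with hkdef
  have hN := im_sq_pos q hab
  have hknn : 0 ≤ k := normSq_nonneg
  have hnsq : normSq q = k ^ 2 := by
    rw [hqdef, map_mul, hk']; ring
  have hqre : k ^ 2 = q.re ^ 2 + (q.imI ^ 2 + q.imJ ^ 2 + q.imK ^ 2) := by
    rw [← hnsq, Quaternion.normSq_def']; ring
  have hkq : 0 < k + q.re := by nlinarith
  -- norm squared of b + star a
  have ha : a.re ^ 2 + a.imI ^ 2 + a.imJ ^ 2 + a.imK ^ 2 = k := by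
    rw [hkdef, Quaternion.normSq_def']
  have hb : b.re ^ 2 + b.imI ^ 2 + b.imJ ^ 2 + b.imK ^ 2 = k := by
    rw [← hk', Quaternion.normSq_def']
  have hM : normSq (b + star a) = 2 * (k + q.re) := by
    rw [Quaternion.normSq_def', hqdef, Quaternion.re_mul]
    simp only [Quaternion.re_add, Quaternion.imI_add, Quaternion.imJ_add, Quaternion.imK_add,
      Quaternion.re_star, Quaternion.imI_star, Quaternion.imJ_star, Quaternion.imK_star]
    linear_combination ha + hb
  have hMpos : 0 < normSq (b + star a) := by rw [hM]; linarith
  have hcne : (b + star a) ≠ 0 := by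
    rw [← Quaternion.normSq_ne_zero]; exact ne_of_gt hMpos
  have hm2 : ‖b + star a‖ ^ 2 = normSq (b + star a) := by
    rw [normSq_eq_norm_mul_self, sq]
  have hmne : ‖b + star a‖ ≠ 0 := norm_ne_zero_iff.mpr hcne
  -- the product a * (b + star a)
  have hu : a * (b + star a) = q + ((k : ℝ) : ℍ[ℝ]) := by
    rw [mul_add, Quaternion.self_mul_star, hqdef]
  have hstarq : star q = ((2 * q.re : ℝ) : ℍ[ℝ]) - q := by
    rw [eq_sub_iff_add_eq, add_comm, Quaternion.self_add_star']
  have hq2 : q * q = (2 * q.re) • q - ((k ^ 2 : ℝ) : ℍ[ℝ]) := by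
    have h1 : q * star q = ((normSq q : ℝ) : ℍ[ℝ]) := Quaternion.self_mul_star q
    rw [hstarq, mul_sub, Quaternion.mul_coe_eq_smul] at h1
    rw [eq_sub_iff_add_eq, ← hnsq, ← h1]
    abel
  have husq : (a * (b + star a)) ^ 2 = normSq (b + star a) • q := by
    rw [hu, sq, add_mul, mul_add, mul_add, Quaternion.mul_coe_eq_smul,
      Quaternion.coe_mul_eq_smul, ← Quaternion.coe_mul, hq2, hM, ← sq]
    match_scalars <;> ring
  have part1 : (‖b + star a‖⁻¹ • (a * (b + star a))) ^ 2 = q := by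
    rw [smul_pow, husq, inv_pow, hm2, smul_smul,
      inv_mul_cancel₀ (ne_of_gt hMpos), one_smul]
  have h2 : a * (b + star a) = (a + star b) * b := by
    rw [mul_add, add_mul, Quaternion.self_mul_star, Quaternion.star_mul_self, hk']
  have hnormc : ‖b + star a‖ = ‖a + star b‖ := by
    rw [← Quaternion.norm_star (b + star a), star_add, star_star, add_comm (star b) a]
  refine ⟨part1, by rw [← h2, hnormc], fun x => ?_⟩
  constructor
  · intro hx
    exact sq_unique q x _ hab hx part1
  · rintro (rfl | rfl)
    · exact part1
    · rw [neg_sq, part1]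
end

section
/- Let a and b be quaternions with ‖a‖ = ‖b‖ such that the product a*b is nonreal (Im(a*b) ≠ 0). Set λ₁ = 1 / ‖a + star b‖ and λ₀ = λ₁ * ‖a‖ * ‖b‖. Then λ₀ and λ₁ are nonzero real numbers, λ₁ = 1 / ‖b + star a‖, and ((λ₀ : ℍ) + λ₁ • (a*b))² = a*b; that is, the square roots of a*b are ±(λ₀ + λ₁·(a*b)). -/
open Quaternion

theorem quaternion_product_sqrt_linear_form (a b : ℍ[ℝ])
    (hnorm : ‖a‖ = ‖b‖) (hab : (a * b).im ≠ 0)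
    (l0 l1 : ℝ)
    (hl1 : l1 = 1 / ‖a + star b‖)
    (hl0 : l0 = l1 * ‖a‖ * ‖b‖) :
    l0 ≠ 0 ∧ l1 ≠ 0 ∧ l1 = 1 / ‖b + star a‖ ∧
      ((l0 : ℍ[ℝ]) + l1 • (a * b)) ^ 2 = a * b := by
  have ha : a ≠ 0 := by rintro rfl; simp at hab
  have hb : b ≠ 0 := by rintro rfl; simp at hab
  have hna : ‖a‖ ≠ 0 := norm_ne_zero_iff.2 ha
  have hnb : ‖b‖ ≠ 0 := norm_ne_zero_iff.2 hb
  have hS : a + star b ≠ 0 := by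
    intro h
    have hb' : b = -star a := by
      have := congrArg star h
      simpa [add_comm, eq_neg_iff_add_eq_zero] using this
    apply hab
    rw [hb', mul_neg, Quaternion.self_mul_star]
    simp
  have hnS : ‖a + star b‖ ≠ 0 := norm_ne_zero_iff.2 hS
  have hl1' : l1 ≠ 0 := by rw [hl1]; positivity
  have hl0' : l0 ≠ 0 := by
    rw [hl0]; exact mul_ne_zero (mul_ne_zero hl1' hna) hnb
  refine ⟨hl0', hl1', ?_, ?_⟩
  · rw [hl1]
    congr 1
    rw [← Quaternion.norm_star (b + star a)]
    congr 1
    simp [add_comm]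
  · set q := a * b with hqdef
    have hkey : ‖a + star b‖ ^ 2 = 2 * ‖a‖ * ‖b‖ + 2 * q.re := by
      rw [sq, ← Quaternion.normSq_eq_norm_mul_self, Quaternion.normSq_add,
        Quaternion.normSq_star, Quaternion.normSq_eq_norm_mul_self,
        Quaternion.normSq_eq_norm_mul_self, star_star, hnorm, hqdef]
      ring
    have h1 : star q * q = ((normSq q : ℝ) : ℍ[ℝ]) := Quaternion.star_mul_self _
    have h2 : q + star q = ((2 * q.re : ℝ) : ℍ[ℝ]) := Quaternion.self_add_star' _
    have h3 : q = ((2 * q.re : ℝ) : ℍ[ℝ]) - star q := by rw [← h2, add_sub_cancel_right]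
    have hq : q * q = ((2 * q.re : ℝ) : ℍ[ℝ]) * q - ((normSq q : ℝ) : ℍ[ℝ]) := by
      nth_rewrite 1 [h3]
      rw [sub_mul, h1]
    have hc1 : l1 ^ 2 * (2 * q.re) + 2 * l0 * l1 = 1 := by
      have h4 : l1 ^ 2 * ‖a + star b‖ ^ 2 = 1 := by
        rw [hl1]; field_simp
      rw [hkey] at h4
      rw [hl0]
      nlinarith [h4]
    have hc0 : l0 ^ 2 = l1 ^ 2 * normSq q := by
      rw [Quaternion.normSq_eq_norm_mul_self, hqdef, norm_mul, hl0]; ring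
    have hco : ∀ r : ℝ, (r : ℍ[ℝ]) = r • (1 : ℍ[ℝ]) := fun r => by
      rw [← mul_one (r : ℍ[ℝ]), Quaternion.coe_mul_eq_smul]
    have hq' : q * q = (2 * q.re) • q - (normSq q) • (1 : ℍ[ℝ]) := by
      rw [hq, hco (2 * q.re), hco (normSq q), smul_mul_assoc, one_mul]
    have expand : ((l0 : ℍ[ℝ]) + l1 • q) ^ 2
        = (l0 * l0 - l1 * l1 * normSq q) • (1 : ℍ[ℝ])
          + (l0 * l1 + l1 * l0 + l1 * l1 * (2 * q.re)) • q := by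
      simp only [sq, hco, add_mul, mul_add, smul_mul_assoc, mul_smul_comm, one_mul, mul_one, hq',
        smul_sub, smul_smul]
      module
    rw [expand]
    have e0 : l0 * l0 - l1 * l1 * normSq q = 0 := by nlinarith [hc0]
    have e1 : l0 * l1 + l1 * l0 + l1 * l1 * (2 * q.re) = 1 := by nlinarith [hc1]
    rw [e0, e1, one_smul, zero_smul, zero_add]
end

section
/- Let a and b be quaternions with Re a = Re b and ‖a‖ = ‖b‖. Then for every quaternion q, the quaternion x = (Im a) * q + q * (Im b) satisfies the homogeneous Sylvester equation a*x − x*b = 0. -/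
open Quaternion

theorem homogeneous_sylvester_solution (a b : ℍ[ℝ])
    (hre : a.re = b.re) (hnorm : ‖a‖ = ‖b‖) (q : ℍ[ℝ]) :
    a * (a.im * q + q * b.im) - (a.im * q + q * b.im) * b = 0 := by
  have hn : normSq a = normSq b := by
    rw [normSq_eq_norm_mul_self, normSq_eq_norm_mul_self, hnorm]
  have him : normSq a.im = normSq b.im := by
    simp only [normSq_def', re_im, imI_im, imJ_im, imK_im] at hn ⊢
    rw [hre] at hn; linarith
  have key : a.im * a.im = b.im * b.im := by
    rw [← sq, ← sq, im_sq, im_sq, him]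
  have ha : a = (a.re : ℍ[ℝ]) + a.im := (re_add_im a).symm
  have hb : b = (b.re : ℍ[ℝ]) + b.im := (re_add_im b).symm
  calc a * (a.im * q + q * b.im) - (a.im * q + q * b.im) * b
      = ((a.re : ℍ[ℝ]) + a.im) * (a.im * q + q * b.im)
        - (a.im * q + q * b.im) * ((b.re : ℍ[ℝ]) + b.im) := by rw [← ha, ← hb]
    _ = (a.re : ℍ[ℝ]) * (a.im * q) - (a.im * q) * (b.re : ℍ[ℝ])
        + ((a.re : ℍ[ℝ]) * (q * b.im) - (q * b.im) * (b.re : ℍ[ℝ]))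
        + (a.im * a.im * q - q * (b.im * b.im)) := by noncomm_ring
    _ = 0 := by
        have c : b.im * b.im * q = q * (b.im * b.im) := by
          rw [← sq, im_sq, neg_mul, mul_neg, coe_commutes]
        rw [key, hre, coe_commutes, coe_commutes, c]
        noncomm_ring
end

section
/- Let a and b be nonreal quaternions with Re a = Re b and ‖a‖ = ‖b‖, and let y be a quaternion with a*y − y*b = 0. Then there exists a quaternion q such that y = (Im a) * q + q * (Im b). Hence x = (Im a)q + q(Im b), with q ranging over all quaternions, is the general solution of the homogeneous singular Sylvester equation a*x − x*b = 0. -/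
open Quaternion

theorem homogeneous_sylvester_general_solution (a b : ℍ[ℝ])
    (ha : a.im ≠ 0) (hb : b.im ≠ 0)
    (hre : a.re = b.re) (hnorm : ‖a‖ = ‖b‖)
    (y : ℍ[ℝ]) (hy : a * y - y * b = 0) :
    ∃ q : ℍ[ℝ], y = a.im * q + q * b.im := by
  have hab : a * y = y * b := sub_eq_zero.mp hy
  have him : a.im * y = y * b.im := by
    have ha' : a.im = a - (a.re : ℍ[ℝ]) := by
      rw [eq_sub_iff_add_eq, add_comm, a.re_add_im]
    have hb' : b.im = b - (b.re : ℍ[ℝ]) := by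
      rw [eq_sub_iff_add_eq, add_comm, b.re_add_im]
    rw [ha', hb', sub_mul, mul_sub, hab, hre, coe_mul_eq_smul, mul_coe_eq_smul]
  have hnsq : normSq a.im = normSq b.im := by
    have h : normSq a = normSq b := by
      have := congrArg (· ^ 2) hnorm
      simpa [sq, ← normSq_eq_norm_mul_self] using this
    have h1 : normSq a.im = normSq a - a.re ^ 2 := by
      simp [normSq_def']; ring
    have h2 : normSq b.im = normSq b - b.re ^ 2 := by
      simp [normSq_def']; ring
    rw [h1, h2, h, hre]
  set s : ℝ := normSq a.im with hs
  have hs0 : s ≠ 0 := by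
    simpa [hs] using (normSq_ne_zero (a := a.im)).mpr ha
  have hstar : star a.im = -a.im := by
    ext <;> simp
  have hsqa : a.im * a.im = ((-s : ℝ) : ℍ[ℝ]) := by
    have := a.im.star_mul_self
    rw [hstar, neg_mul] at this
    have h := neg_eq_iff_eq_neg.mp this
    rw [hs]; push_cast; exact h
  have hsqb : b.im * b.im = ((-s : ℝ) : ℍ[ℝ]) := by
    have hstarb : star b.im = -b.im := by ext <;> simp
    have := b.im.star_mul_self
    rw [hstarb, neg_mul] at this
    have h := neg_eq_iff_eq_neg.mp this
    rw [hnsq]; push_cast; exact h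
  refine ⟨(-(2 * s))⁻¹ • (a.im * y), ?_⟩
  rw [mul_smul_comm, smul_mul_assoc, ← smul_add]
  have key : a.im * (a.im * y) + a.im * y * b.im = (-(2 * s)) • y := by
    rw [him, ← mul_assoc, him, mul_assoc y, hsqb]
    simp only [mul_coe_eq_smul]
    module
  rw [key, smul_smul, inv_mul_cancel₀ (by simpa using hs0), one_smul]
end

section
/- Let a and b be nonreal quaternions with Re a = Re b, ‖a‖ = ‖b‖, and a*b ≠ b*a. Then a quaternion x satisfies a*x − x*b = 0 if and only if there exist real numbers λ and μ such that x = λ • ((Im a) * (Im a + Im b)) + μ • (Im a + Im b). (Up to real scaling, (Im a)(Im a + Im b)/‖Im a + Im b‖ is a square root of (Im a)·star(Im b), so the solutions are exactly x = λ√((Im a)(Im b)*) + μ·Im(a+b).) -/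
set_option maxHeartbeats 1000000

open Quaternion

theorem homogeneous_sylvester_nonzero_solutions (a b : ℍ[ℝ])
    (ha : a.im ≠ 0) (hb : b.im ≠ 0)
    (hre : a.re = b.re) (hnorm : ‖a‖ = ‖b‖) (hcomm : a * b ≠ b * a)
    (x : ℍ[ℝ]) :
    a * x - x * b = 0 ↔
      ∃ l m : ℝ, x = l • (a.im * (a.im + b.im)) + m • (a.im + b.im) := by
  have h : normSq a = normSq b := by
    rw [Quaternion.normSq_eq_norm_mul_self, Quaternion.normSq_eq_norm_mul_self, hnorm]
  have h' : a.re^2 + a.imI^2 + a.imJ^2 + a.imK^2 = b.re^2 + b.imI^2 + b.imJ^2 + b.imK^2 := by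
    rw [← Quaternion.normSq_def', ← Quaternion.normSq_def', h]
  have hA : a.imI^2 + a.imJ^2 + a.imK^2 = b.imI^2 + b.imJ^2 + b.imK^2 := by
    linear_combination h' - (a.re + b.re) * hre
  have hsq : a.im * a.im = b.im * b.im := by
    ext <;> simp [Quaternion.re_mul, Quaternion.imI_mul, Quaternion.imJ_mul,
      Quaternion.imK_mul] <;> nlinarith [hA]
  set s : ℍ[ℝ] := a.im + b.im with hs_def
  have hsb : a.im * s = s * b.im := by
    rw [hs_def, mul_add, add_mul, hsq]; exact add_comm _ _
  have h2 : a.im * (a.im * s) = (a.im * s) * b.im := by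
    conv_lhs => rw [hsb]
    exact (mul_assoc _ _ _).symm
  have hred : ∀ y : ℍ[ℝ], a * y - y * b = a.im * y - y * b.im := by
    intro y
    nth_rewrite 1 [← re_add_im a]
    nth_rewrite 1 [← re_add_im b]
    rw [add_mul, mul_add, hre, coe_commutes]
    abel
  have hs0 : s ≠ 0 := by
    intro h0
    apply hcomm
    have hb_im : b.im = -a.im := eq_neg_of_add_eq_zero_right (hs_def ▸ h0)
    have eI : b.imI = -a.imI := by rw [← Quaternion.imI_im b, hb_im]; simp
    have eJ : b.imJ = -a.imJ := by rw [← Quaternion.imJ_im b, hb_im]; simp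
    have eK : b.imK = -a.imK := by rw [← Quaternion.imK_im b, hb_im]; simp
    ext <;> simp [Quaternion.re_mul, Quaternion.imI_mul, Quaternion.imJ_mul,
      Quaternion.imK_mul, eI, eJ, eK, ← hre] <;> ring
  have hN : a.imI^2 + a.imJ^2 + a.imK^2 ≠ 0 := by
    have hcase : a.imI ≠ 0 ∨ a.imJ ≠ 0 ∨ a.imK ≠ 0 := by
      by_contra hc
      push_neg at hc
      exact ha (by ext <;> simp [hc.1, hc.2.1, hc.2.2])
    rcases hcase with h0 | h0 | h0 <;>
      · have := mul_self_pos.mpr h0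
        nlinarith [sq_nonneg a.imI, sq_nonneg a.imJ, sq_nonneg a.imK]
  constructor
  · intro hx
    have hx' : a.im * x = x * b.im := by
      have hh := hred x
      rw [hx] at hh
      exact sub_eq_zero.mp hh.symm
    set u : ℍ[ℝ] := x * s⁻¹ with hu_def
    have hxu : x = u * s := by
      rw [hu_def, mul_assoc, inv_mul_cancel₀ hs0, mul_one]
    clear_value u
    have hcu : a.im * u = u * a.im := by
      apply mul_right_cancel₀ hs0
      calc a.im * u * s = a.im * x := by rw [mul_assoc, ← hxu]
        _ = x * b.im := hx'
        _ = u * (s * b.im) := by rw [hxu, mul_assoc]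
        _ = u * (a.im * s) := by rw [← hsb]
        _ = u * a.im * s := (mul_assoc u a.im s).symm
    have c1 : u.imJ * a.imK = u.imK * a.imJ := by
      have hh := congrArg QuaternionAlgebra.imI hcu
      simp [Quaternion.imI_mul] at hh
      linarith
    have c2 : u.imK * a.imI = u.imI * a.imK := by
      have hh := congrArg QuaternionAlgebra.imJ hcu
      simp [Quaternion.imJ_mul] at hh
      linarith
    have c3 : u.imI * a.imJ = u.imJ * a.imI := by
      have hh := congrArg QuaternionAlgebra.imK hcu
      simp [Quaternion.imK_mul] at hh
      linarith
    have k1 : (a.imI^2 + a.imJ^2 + a.imK^2) * u.imI =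
        (u.imI*a.imI + u.imJ*a.imJ + u.imK*a.imK) * a.imI := by
      linear_combination a.imJ * c3 - a.imK * c2
    have k2 : (a.imI^2 + a.imJ^2 + a.imK^2) * u.imJ =
        (u.imI*a.imI + u.imJ*a.imJ + u.imK*a.imK) * a.imJ := by
      linear_combination a.imK * c1 - a.imI * c3
    have k3 : (a.imI^2 + a.imJ^2 + a.imK^2) * u.imK =
        (u.imI*a.imI + u.imJ*a.imJ + u.imK*a.imK) * a.imK := by
      linear_combination a.imI * c2 - a.imJ * c1
    refine ⟨(u.imI*a.imI + u.imJ*a.imJ + u.imK*a.imK)/(a.imI^2 + a.imJ^2 + a.imK^2),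
      u.re, ?_⟩
    rw [hxu, hs_def]
    ext
    · simp only [Quaternion.re_mul, Quaternion.re_add, Quaternion.imI_add,
        Quaternion.imJ_add, Quaternion.imK_add, Quaternion.re_im, Quaternion.imI_im,
        Quaternion.imJ_im, Quaternion.imK_im, Quaternion.re_smul, Quaternion.imI_smul,
        Quaternion.imJ_smul, Quaternion.imK_smul, smul_eq_mul]
      field_simp
      linear_combination (a.imI - b.imI) * k1 + (a.imJ - b.imJ) * k2 + (a.imK - b.imK) * k3
    · simp only [Quaternion.imI_mul, Quaternion.re_add, Quaternion.imI_add,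
        Quaternion.imJ_add, Quaternion.imK_add, Quaternion.re_im, Quaternion.imI_im,
        Quaternion.imJ_im, Quaternion.imK_im, Quaternion.re_smul, Quaternion.imI_smul,
        Quaternion.imJ_smul, Quaternion.imK_smul, smul_eq_mul]
      field_simp
      linear_combination (a.imK + b.imK) * k2 - (a.imJ + b.imJ) * k3
    · simp only [Quaternion.imJ_mul, Quaternion.re_add, Quaternion.imI_add,
        Quaternion.imJ_add, Quaternion.imK_add, Quaternion.re_im, Quaternion.imI_im,
        Quaternion.imJ_im, Quaternion.imK_im, Quaternion.re_smul, Quaternion.imI_smul,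
        Quaternion.imJ_smul, Quaternion.imK_smul, smul_eq_mul]
      field_simp
      linear_combination (a.imI + b.imI) * k3 - (a.imK + b.imK) * k1
    · simp only [Quaternion.imK_mul, Quaternion.re_add, Quaternion.imI_add,
        Quaternion.imJ_add, Quaternion.imK_add, Quaternion.re_im, Quaternion.imI_im,
        Quaternion.imJ_im, Quaternion.imK_im, Quaternion.re_smul, Quaternion.imI_smul,
        Quaternion.imJ_smul, Quaternion.imK_smul, smul_eq_mul]
      field_simp
      linear_combination (a.imJ + b.imJ) * k1 - (a.imI + b.imI) * k2
  · rintro ⟨l, m, rfl⟩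
    rw [hred, mul_add, add_mul, mul_smul_comm, mul_smul_comm, smul_mul_assoc,
      smul_mul_assoc, h2, hsb]
    abel
end

section
/- Let a be a nonreal quaternion (Im a ≠ 0). Then a quaternion x satisfies a*x = x*(star a) if and only if Re x = 0 and Re((Im a) * x) = 0; that is, the solutions are exactly the pure quaternions whose vector part is orthogonal to Im a. -/
open Quaternion

theorem homogeneous_sylvester_case_b_eq_conj_a (a : ℍ[ℝ]) (ha : a.im ≠ 0)
    (x : ℍ[ℝ]) :
    a * x = x * star a ↔ x.re = 0 ∧ (a.im * x).re = 0 := by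
  have hcomp : a.imI ≠ 0 ∨ a.imJ ≠ 0 ∨ a.imK ≠ 0 := by
    by_contra hc
    push_neg at hc
    apply ha
    ext <;> simp [hc.1, hc.2.1, hc.2.2]
  constructor
  · intro h
    rw [Quaternion.ext_iff] at h
    obtain ⟨h0, h1, h2, h3⟩ := h
    simp [Quaternion.re_mul, Quaternion.imI_mul, Quaternion.imJ_mul,
      Quaternion.imK_mul] at h0 h1 h2 h3 ⊢
    have hre : x.re = 0 := by
      obtain hI | hJ | hK := hcomp
      · have : a.imI * x.re = 0 := by linarith
        exact (mul_eq_zero.mp this).resolve_left hI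
      · have : a.imJ * x.re = 0 := by linarith
        exact (mul_eq_zero.mp this).resolve_left hJ
      · have : a.imK * x.re = 0 := by linarith
        exact (mul_eq_zero.mp this).resolve_left hK
    exact ⟨hre, by linarith⟩
  · rintro ⟨hre, hdot⟩
    simp [Quaternion.re_mul] at hdot
    ext <;> simp [Quaternion.re_mul, Quaternion.imI_mul, Quaternion.imJ_mul,
      Quaternion.imK_mul, hre] <;> linarith
end

section
/- Let a and b be nonreal quaternions with Re a = Re b and ‖a‖ = ‖b‖, and let c be a nonzero quaternion. Then there exists a quaternion x with a*x − x*b = c if and only if a*c = c*(star b). -/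
open Quaternion

private lemma sylv_key (t u v a b x : ℍ[ℝ]) (hA : a = u + t) (hB : b = v + t)
    (hcc : t * x = x * t) : a * x - x * b = u * x - x * v := by
  subst hA hB
  rw [add_mul, mul_add, hcc]
  abel

private lemma sylv_expand (t u v c : ℍ[ℝ]) (hcc : t * c = c * t) :
    (u + t) * c - c * (t - v) = u * c + c * v := by
  rw [add_mul, mul_sub, hcc]
  abel

private lemma sylv_aux (u v c : ℍ[ℝ]) (r : ℝ)
    (hu2 : u * u = ((-r : ℝ) : ℍ[ℝ])) (hv2 : v * v = ((-r : ℝ) : ℍ[ℝ]))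
    (hune : u ≠ 0) :
    (∃ x : ℍ[ℝ], u * x - x * v = c) ↔ u * c + c * v = 0 := by
  constructor
  · rintro ⟨x, hx⟩
    have e1 : u * c + c * v = (u * u) * x - x * (v * v) := by
      rw [← hx]; noncomm_ring
    rw [e1, hu2, hv2, Quaternion.coe_commutes, sub_self]
  · intro h
    have hcv : c * v = -(u * c) := eq_neg_of_add_eq_zero_right h
    refine ⟨(2 : ℝ)⁻¹ • (u⁻¹ * c), ?_⟩
    have h1 : u * ((2 : ℝ)⁻¹ • (u⁻¹ * c)) = (2 : ℝ)⁻¹ • c := by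
      rw [mul_smul_comm, ← mul_assoc, mul_inv_cancel₀ hune, one_mul]
    have h2 : ((2 : ℝ)⁻¹ • (u⁻¹ * c)) * v = -((2 : ℝ)⁻¹ • c) := by
      rw [smul_mul_assoc, mul_assoc, hcv, mul_neg, ← mul_assoc,
        inv_mul_cancel₀ hune, one_mul, smul_neg]
    rw [h1, h2, sub_neg_eq_add, ← add_smul]
    norm_num

theorem inhomogeneous_sylvester_solvability (a b c : ℍ[ℝ])
    (ha : a.im ≠ 0) (hb : b.im ≠ 0)
    (hre : a.re = b.re) (hnorm : ‖a‖ = ‖b‖) (hc : c ≠ 0) :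
    (∃ x : ℍ[ℝ], a * x - x * b = c) ↔ a * c = c * star b := by
  obtain ⟨t, ht⟩ : ∃ t : ℍ[ℝ], t = (a.re : ℍ[ℝ]) := ⟨_, rfl⟩
  obtain ⟨u, hu⟩ : ∃ u : ℍ[ℝ], u = a - t := ⟨_, rfl⟩
  obtain ⟨v, hv⟩ : ∃ v : ℍ[ℝ], v = b - t := ⟨_, rfl⟩
  have hA : a = u + t := by rw [hu]; abel
  have hB : b = v + t := by rw [hv]; abel
  have hure : u.re = 0 := by simp [hu, ht]
  have hvre : v.re = 0 := by simp [hv, ht, hre]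
  have hsu : star u = -u := star_eq_neg.mpr hure
  have hsv : star v = -v := star_eq_neg.mpr hvre
  have hnormSq : normSq a = normSq b := by
    have h1 : ‖a‖ * ‖a‖ = ‖b‖ * ‖b‖ := by rw [hnorm]
    rw [← Quaternion.normSq_eq_norm_mul_self, ← Quaternion.normSq_eq_norm_mul_self] at h1
    exact h1
  have hr : normSq u = normSq v := by
    have h1 : normSq a = normSq u + a.re ^ 2 := by
      simp [Quaternion.normSq_def', hu, ht]; ring
    have h2 : normSq b = normSq v + a.re ^ 2 := by
      simp [Quaternion.normSq_def', hv, ht, ← hre]; ring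
    have h3 := hnormSq
    rw [h1, h2] at h3
    linarith
  have hu2 : u * u = ((-(normSq u) : ℝ) : ℍ[ℝ]) := by
    have h0 := u.self_mul_star
    rw [hsu, mul_neg] at h0
    have h2 : u * u = -((normSq u : ℝ) : ℍ[ℝ]) := by
      rw [← neg_neg (u * u), h0]
    rw [h2]; push_cast; ring
  have hv2 : v * v = ((-(normSq u) : ℝ) : ℍ[ℝ]) := by
    have h0 := v.self_mul_star
    rw [hsv, mul_neg] at h0
    have h2 : v * v = -((normSq v : ℝ) : ℍ[ℝ]) := by
      rw [← neg_neg (v * v), h0]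
    rw [h2, ← hr, Quaternion.coe_neg]
  have hune : u ≠ 0 := by
    intro h0
    apply ha
    have : u.im = a.im := by simp [hu, ht]
    rw [← this, h0]
    simp
  have hstarb : star b = t - v := by
    have hsum : b + star b = ((2 * b.re : ℝ) : ℍ[ℝ]) := by
      ext <;> simp [mul_comm] <;> ring
    have h2 : star b = ((2 * b.re : ℝ) : ℍ[ℝ]) - b := by
      rw [← hsum]; abel
    rw [h2, hv, ht, hre, two_mul, Quaternion.coe_add]
    abel
  have hcc : t * c = c * t := by rw [ht]; exact Quaternion.coe_commutes _ _
  have hrhs : (a * c = c * star b) ↔ (u * c + c * v = 0) := by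
    rw [hstarb, hA, ← sylv_expand t u v c hcc, sub_eq_zero]
  have hkey : ∀ x : ℍ[ℝ], a * x - x * b = u * x - x * v := fun x =>
    sylv_key t u v a b x hA hB (by rw [ht]; exact Quaternion.coe_commutes _ _)
  rw [hrhs]
  have : (∃ x : ℍ[ℝ], a * x - x * b = c) ↔ ∃ x : ℍ[ℝ], u * x - x * v = c := by
    constructor <;> rintro ⟨x, hx⟩ <;> exact ⟨x, by rw [← hx, hkey x]⟩ 
  rw [this]
  exact sylv_aux u v c (normSq u) hu2 hv2 hune
end

section
/- Let a and b be nonreal quaternions with Re a = Re b and ‖a‖ = ‖b‖, and let c be a nonzero quaternion with a*c = c*(star b). Then a quaternion x satisfies a*x − x*b = c if and only if there exists a quaternion q such that x = (4‖Im a‖²)⁻¹ • ((Im a) * (q − c)) + (4‖Im b‖²)⁻¹ • ((q + c) * (Im b)). -/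
open Quaternion

theorem sylvester_key_aux (α β c x : ℍ[ℝ]) (N : ℝ) (hN : N ≠ 0)
    (hαα : α * α = ((-N : ℝ) : ℍ[ℝ]))
    (hββ : β * β = ((-N : ℝ) : ℍ[ℝ]))
    (hflip : α * c = -(c * β)) :
    α * x - x * β = c ↔
      ∃ q : ℍ[ℝ], x = (4 * N)⁻¹ • (α * (q - c)) + (4 * N)⁻¹ • ((q + c) * β) := by
  have h4N : (4 * N : ℝ) ≠ 0 := by positivity
  constructor
  · intro h
    refine ⟨-(α * x + x * β), ?_⟩
    rw [← h]
    have e1 : α * (-(α * x + x * β) - (α * x - x * β)) = -((α * α) * x) - (α * α) * x := by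
      noncomm_ring
    have e2 : (-(α * x + x * β) + (α * x - x * β)) * β = -(x * (β * β)) - x * (β * β) := by
      noncomm_ring
    rw [e1, e2, hαα, hββ, coe_mul_eq_smul, mul_coe_eq_smul]
    have e3 : -((-N : ℝ) • x) - (-N : ℝ) • x = (2 * N) • x := by module
    rw [e3, smul_smul, ← add_smul]
    have : (4 * N)⁻¹ * (2 * N) + (4 * N)⁻¹ * (2 * N) = 1 := by
      field_simp
      ring
    rw [this, one_smul]
  · rintro ⟨q, rfl⟩
    have t1 : α * (α * (q - c)) = (-N : ℝ) • (q - c) := by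
      rw [← mul_assoc, hαα, coe_mul_eq_smul]
    have t2 : (q + c) * (β * β) = (-N : ℝ) • (q + c) := by
      rw [hββ, mul_coe_eq_smul]
    have t3 : α * ((q + c) * β) - (α * (q - c)) * β = (2 * N) • c := by
      have e : α * ((q + c) * β) - (α * (q - c)) * β = (α * c) * β + (α * c) * β := by
        noncomm_ring
      rw [e, hflip]
      have e2 : -(c * β) * β = N • c := by
        rw [neg_mul, mul_assoc, hββ, mul_coe_eq_smul, neg_smul, neg_neg]
      rw [e2]
      module
    have main : α * (α * (q - c)) + α * ((q + c) * β)
        - ((α * (q - c)) * β + (q + c) * (β * β)) = (4 * N) • c := by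
      have rearr : α * (α * (q - c)) + α * ((q + c) * β)
          - ((α * (q - c)) * β + (q + c) * (β * β))
          = (α * (α * (q - c)) - (q + c) * (β * β))
            + (α * ((q + c) * β) - (α * (q - c)) * β) := by abel
      rw [rearr, t1, t2, t3]
      module
    calc α * ((4 * N)⁻¹ • (α * (q - c)) + (4 * N)⁻¹ • ((q + c) * β))
          - ((4 * N)⁻¹ • (α * (q - c)) + (4 * N)⁻¹ • ((q + c) * β)) * β
        = (4 * N)⁻¹ • (α * (α * (q - c)) + α * ((q + c) * β)
            - ((α * (q - c)) * β + (q + c) * (β * β))) := by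
          rw [mul_add α ((4 * N)⁻¹ • (α * (q - c))) ((4 * N)⁻¹ • ((q + c) * β)),
            add_mul ((4 * N)⁻¹ • (α * (q - c))) ((4 * N)⁻¹ • ((q + c) * β)) β,
            mul_smul_comm, mul_smul_comm, smul_mul_assoc, smul_mul_assoc,
            ← smul_add, ← smul_add, ← smul_sub, mul_assoc ((q + c)) β β]
      _ = (4 * N)⁻¹ • ((4 * N) • c) := by rw [main]
      _ = c := by rw [smul_smul, inv_mul_cancel₀ h4N, one_smul]

theorem inhomogeneous_sylvester_general_solution (a b c : ℍ[ℝ])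
    (ha : a.im ≠ 0) (hb : b.im ≠ 0)
    (hre : a.re = b.re) (hnorm : ‖a‖ = ‖b‖)
    (hc : c ≠ 0) (hsolv : a * c = c * star b) (x : ℍ[ℝ]) :
    a * x - x * b = c ↔
      ∃ q : ℍ[ℝ], x = (4 * ‖a.im‖ ^ 2)⁻¹ • (a.im * (q - c)) +
        (4 * ‖b.im‖ ^ 2)⁻¹ • ((q + c) * b.im) := by
  have him : ∀ y : ℍ[ℝ], ‖y.im‖ ^ 2 = ‖y‖ ^ 2 - y.re ^ 2 := by
    intro y
    have e1 : ‖y‖ ^ 2 = normSq y := by rw [normSq_eq_norm_mul_self, sq]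
    have e2 : ‖y.im‖ ^ 2 = normSq y.im := by rw [normSq_eq_norm_mul_self, sq]
    rw [e1, e2, normSq_def', normSq_def']
    simp only [Quaternion.re_im, Quaternion.imI_im, Quaternion.imJ_im, Quaternion.imK_im]
    ring
  have hN2 : ‖b.im‖ ^ 2 = ‖a.im‖ ^ 2 := by
    rw [him a, him b, hre, hnorm]
  have hsq : ∀ y : ℍ[ℝ], y.im * y.im = ((-(‖y.im‖ ^ 2) : ℝ) : ℍ[ℝ]) := by
    intro y
    have e := im_sq y
    rw [sq] at e
    have e2 : normSq y.im = ‖y.im‖ ^ 2 := by rw [normSq_eq_norm_mul_self, sq]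
    rw [e, e2, Quaternion.coe_neg]
  have hsqb : b.im * b.im = ((-(‖a.im‖ ^ 2) : ℝ) : ℍ[ℝ]) := by rw [hsq b, hN2]
  have hNne : (‖a.im‖ ^ 2 : ℝ) ≠ 0 := pow_ne_zero _ (norm_ne_zero_iff.mpr ha)
  have hstar : star b = (↑b.re : ℍ[ℝ]) - b.im := by
    rw [← re_add_im (star b)]
    simp [sub_eq_add_neg]
  have hflip : a.im * c = -(c * b.im) := by
    have h := hsolv
    nth_rewrite 1 [← re_add_im a] at h
    rw [hstar, hre, add_mul, mul_sub, coe_commutes, sub_eq_add_neg] at h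
    exact add_left_cancel h
  have expand : a * x - x * b = a.im * x - x * b.im := by
    nth_rewrite 1 [← re_add_im a]
    nth_rewrite 1 [← re_add_im b]
    rw [hre, add_mul, mul_add, coe_commutes]
    abel
  rw [hN2, expand]
  exact sylvester_key_aux a.im b.im c x (‖a.im‖ ^ 2) hNne (hsq a) hsqb hflip
end
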